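/- arXiv:2003.06886 — 4 statements merged into one kernel-verified Lean document; each statement's English description precedes it below -/
import Mathlib

section
/- Let h₁, h₂ be Hermitian operators that anticommute and square to the identity, and set H = (1/(2i))[h₁,h₂]. For every t with 0 ≤ t ≤ π/2 there exist real pulse times t₁, t₂ such that exp(itH) = exp(it₁h₁)·exp(it₂h₂)·exp(it₂h₁)·exp(it₁h₂). Explicitly one may take t₁ = (1/2)·atan2( √(sin 2t)/(sin t + cos t), 1/(sin t + cos t) ) and t₂ = (1/2)·atan2( -√(sin 2t), cos t - sin t ). -/
open NormedSpace

/-- Two-argument arctangent: `atan2 y x = arg (x + y i)`. -/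
noncomputable def atan2 (y x : ℝ) : ℝ := Complex.arg (x + y * Complex.I)

lemma exp_smul_of_sq_eq_one {A : Type*} [NormedRing A] [NormedAlgebra ℂ A]
    [CompleteSpace A] (a : A) (ha : a ^ 2 = 1) (θ : ℝ) :
    exp ((Complex.I * θ) • a) =
      ((Real.cos θ : ℂ)) • (1 : A) + ((Real.sin θ : ℂ) * Complex.I) • a := by
  rw [exp_eq_tsum ℂ]
  refine (HasSum.even_add_odd ?_ ?_).tsum_eq
  · have h := (Complex.hasSum_cos' (θ : ℂ)).smul_const (1 : A)
    rw [← Complex.ofReal_cos] at h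
    convert h using 2 with k
    rw [smul_pow, pow_mul a 2 k, ha, one_pow, smul_smul]
    congr 1
    rw [div_eq_mul_inv]
    ring
  · have h := ((Complex.hasSum_sin' (θ : ℂ)).mul_right Complex.I).smul_const a
    rw [← Complex.ofReal_sin] at h
    convert h using 2 with k
    rw [smul_pow, pow_succ a, pow_mul a 2 k, ha, one_pow, one_mul, smul_smul]
    congr 1
    rw [div_mul_cancel₀ _ Complex.I_ne_zero, div_eq_mul_inv]
    ring

lemma atan2_cos_sin {x y : ℝ} (h : x ^ 2 + y ^ 2 = 1) :
    Real.cos (atan2 y x) = x ∧ Real.sin (atan2 y x) = y := by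
  have hre : ((x : ℂ) + y * Complex.I).re = x := by simp
  have him : ((x : ℂ) + y * Complex.I).im = y := by simp
  have habs : ‖((x : ℂ) + y * Complex.I)‖ = 1 := by
    rw [Complex.norm_def, Complex.normSq_apply, hre, him,
      show x * x + y * y = 1 by nlinarith [h]]
    exact Real.sqrt_one
  have hz : ((x : ℂ) + y * Complex.I) ≠ 0 := by
    intro h0; rw [h0] at habs; simp at habs
  constructor
  · rw [atan2, Complex.cos_arg hz, hre, habs, div_one]
  · rw [atan2, Complex.sin_arg, him, habs, div_one]

/-- Depth-4 decomposition: for `0 ≤ t ≤ π/2`, `exp(itH)` with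
`H = (1/(2i))[h₁,h₂]` decomposes as a product of four two-pulse exponentials,
with explicit pulse times given by two-argument arctangents. -/
theorem depth4_decomposition
    {A : Type*} [NormedRing A] [StarRing A] [NormedAlgebra ℂ A]
    [CompleteSpace A] [StarModule ℂ A]
    (h₁ h₂ H : A)
    (sa1 : IsSelfAdjoint h₁) (sa2 : IsSelfAdjoint h₂)
    (anti : h₁ * h₂ = -(h₂ * h₁))
    (sq1 : h₁ ^ 2 = 1) (sq2 : h₂ ^ 2 = 1)
    (hH : H = (2 * Complex.I)⁻¹ • (h₁ * h₂ - h₂ * h₁))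
    (t : ℝ) (ht0 : 0 ≤ t) (ht1 : t ≤ Real.pi / 2) :
    ∃ t₁ t₂ : ℝ,
      t₁ = (1 / 2) * atan2 (Real.sqrt (Real.sin (2 * t)) / (Real.sin t + Real.cos t))
              (1 / (Real.sin t + Real.cos t)) ∧
      t₂ = (1 / 2) * atan2 (-Real.sqrt (Real.sin (2 * t))) (Real.cos t - Real.sin t) ∧
      exp ((Complex.I * t) • H) =
        exp ((Complex.I * t₁) • h₁) * exp ((Complex.I * t₂) • h₂) *
        exp ((Complex.I * t₂) • h₁) * exp ((Complex.I * t₁) • h₂) := by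
  have h21 : h₂ * h₁ = -(h₁ * h₂) := by rw [anti, neg_neg]
  have hh1 : h₁ * h₁ = 1 := by rw [← sq, sq1]
  have hh2 : h₂ * h₂ = 1 := by rw [← sq, sq2]
  have hxy : (h₁ * h₂) * (h₁ * h₂) = -1 := by
    calc (h₁ * h₂) * (h₁ * h₂) = h₁ * (h₂ * h₁) * h₂ := by noncomm_ring
    _ = h₁ * (-(h₁ * h₂)) * h₂ := by rw [h21]
    _ = -((h₁ * h₁) * (h₂ * h₂)) := by noncomm_ring
    _ = -1 := by rw [hh1, hh2, one_mul]
  have hHe : H = (-Complex.I) • (h₁ * h₂) := by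
    rw [hH, h21, sub_neg_eq_add, ← two_smul ℂ, smul_smul]
    congr 1
    rw [mul_inv, Complex.inv_I]
    ring
  have hH2 : H ^ 2 = 1 := by
    rw [hHe, smul_pow, pow_two (h₁ * h₂), hxy, show ((-Complex.I) ^ 2 : ℂ) = -1 by
      rw [neg_sq, Complex.I_sq]]
    simp
  set s := Real.sin t with hs_def
  set c := Real.cos t with hc_def
  set r := Real.sqrt (Real.sin (2 * t)) with hr_def
  have hpyth : s ^ 2 + c ^ 2 = 1 := Real.sin_sq_add_cos_sq t
  have hs0 : 0 ≤ s := Real.sin_nonneg_of_nonneg_of_le_pi ht0 (by linarith [Real.pi_pos])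
  have hc0 : 0 ≤ c := Real.cos_nonneg_of_mem_Icc ⟨by linarith [Real.pi_pos], ht1⟩
  have h2t : Real.sin (2 * t) = 2 * s * c := Real.sin_two_mul t
  have hr2 : r ^ 2 = 2 * s * c := by
    rw [hr_def, Real.sq_sqrt (by rw [h2t]; positivity), h2t]
  have hu : 0 < s + c := by nlinarith [hpyth, hs0, hc0]
  have hune : s + c ≠ 0 := ne_of_gt hu
  set a1 := atan2 (r / (s + c)) (1 / (s + c)) with ha1
  set a2 := atan2 (-r) (c - s) with ha2
  obtain ⟨hcos1, hsin1⟩ := atan2_cos_sin (x := 1 / (s + c)) (y := r / (s + c))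
    (by field_simp; linear_combination hr2 - hpyth)
  obtain ⟨hcos2, hsin2⟩ := atan2_cos_sin (x := c - s) (y := -r)
    (by nlinarith [hr2, hpyth])
  refine ⟨(1 / 2) * a1, (1 / 2) * a2, rfl, rfl, ?_⟩
  simp only [exp_smul_of_sq_eq_one H hH2, exp_smul_of_sq_eq_one h₁ sq1,
    exp_smul_of_sq_eq_one h₂ sq2]
  set c1 := Real.cos (1 / 2 * a1) with hc1_def
  set s1 := Real.sin (1 / 2 * a1) with hs1_def
  set c2 := Real.cos (1 / 2 * a2) with hc2_def
  set s2 := Real.sin (1 / 2 * a2) with hs2_def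
  have e1 : (2 * c1 ^ 2 - 1) * (s + c) = 1 := by
    have h' : Real.cos a1 = 2 * c1 ^ 2 - 1 := by
      rw [show a1 = 2 * (1 / 2 * a1) by ring, Real.cos_two_mul]
    have h'' : (2 * c1 ^ 2 - 1 : ℝ) = 1 / (s + c) := by rw [← h']; exact hcos1
    rw [h'']; field_simp
  have e2 : (2 * s1 * c1) * (s + c) = r := by
    have h' : Real.sin a1 = 2 * s1 * c1 := by
      rw [show a1 = 2 * (1 / 2 * a1) by ring, Real.sin_two_mul]
    have h'' : (2 * s1 * c1 : ℝ) = r / (s + c) := by rw [← h']; exact hsin1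
    rw [h'']; field_simp
  have e3 : 2 * c2 ^ 2 - 1 = c - s := by
    have h' : Real.cos a2 = 2 * c2 ^ 2 - 1 := by
      rw [show a2 = 2 * (1 / 2 * a2) by ring, Real.cos_two_mul]
    rw [← h']; exact hcos2
  have e4 : 2 * s2 * c2 = -r := by
    have h' : Real.sin a2 = 2 * s2 * c2 := by
      rw [show a2 = 2 * (1 / 2 * a2) by ring, Real.sin_two_mul]
    rw [← h']; exact hsin2
  have p1 : s1 ^ 2 + c1 ^ 2 = 1 := Real.sin_sq_add_cos_sq _
  have p2 : s2 ^ 2 + c2 ^ 2 = 1 := Real.sin_sq_add_cos_sq _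
  have q1 : (s1 : ℂ) ^ 2 + (c1 : ℂ) ^ 2 = 1 := by exact_mod_cast p1
  have q2 : (s2 : ℂ) ^ 2 + (c2 : ℂ) ^ 2 = 1 := by exact_mod_cast p2
  have qd1 : (2 * (c1 : ℂ) ^ 2 - 1) * ((s : ℂ) + (c : ℂ)) = 1 := by exact_mod_cast e1
  have qd2 : (2 * (s1 : ℂ) * (c1 : ℂ)) * ((s : ℂ) + (c : ℂ)) = (r : ℂ) := by exact_mod_cast e2
  have qd3 : 2 * (c2 : ℂ) ^ 2 - 1 = (c : ℂ) - (s : ℂ) := by exact_mod_cast e3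
  have qd4 : 2 * (s2 : ℂ) * (c2 : ℂ) = -(r : ℂ) := by exact_mod_cast e4
  have qr : (r : ℂ) ^ 2 = 2 * (s : ℂ) * (c : ℂ) := by exact_mod_cast hr2
  have qp : (s : ℂ) ^ 2 + (c : ℂ) ^ 2 = 1 := by exact_mod_cast hpyth
  have hI := Complex.I_sq
  have w21x : ∀ x : A, h₂ * (h₁ * x) = -(h₁ * (h₂ * x)) := fun x => by
    rw [← mul_assoc, h21, neg_mul, mul_assoc]
  have w11x : ∀ x : A, h₁ * (h₁ * x) = x := fun x => by rw [← mul_assoc, hh1, one_mul]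
  have w22x : ∀ x : A, h₂ * (h₂ * x) = x := fun x => by rw [← mul_assoc, hh2, one_mul]
  rw [hHe]
  simp only [mul_add, add_mul, smul_mul_assoc, mul_smul_comm, smul_smul, one_mul, mul_one,
    mul_assoc, h21, hh1, hh2, w21x, w11x, w22x, mul_neg, neg_mul, smul_neg, neg_smul,
    smul_add, neg_neg, neg_add]
  have hcc : Complex.cos (t : ℂ) = (c : ℂ) := (Complex.ofReal_cos t).symm
  have hss : Complex.sin (t : ℂ) = (s : ℂ) := (Complex.ofReal_sin t).symm
  have h2u : (2 * ((s:ℂ)+(c:ℂ))) ≠ 0 := by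
    have hne : ((s:ℂ)+(c:ℂ)) ≠ 0 := by exact_mod_cast hune
    exact mul_ne_zero two_ne_zero hne
  have qd24 : (2*(s1:ℂ)*(c1:ℂ)*((s:ℂ)+(c:ℂ)))*(2*(s2:ℂ)*(c2:ℂ)) = (r:ℂ)*(-(r:ℂ)) := by
    rw [qd2, qd4]
  have qd41 : (2*(s2:ℂ)*(c2:ℂ))*((2*(c1:ℂ)^2-1)*((s:ℂ)+(c:ℂ))) = (-(r:ℂ))*1 := by
    rw [qd4, qd1]
  match_scalars
  · refine mul_right_cancel₀ h2u ?_
    linear_combination (2*((s:ℂ)+(c:ℂ)))*hcc - 4*((s:ℂ)+(c:ℂ))*(c1:ℂ)*(c2:ℂ)*(s1:ℂ)*(s2:ℂ)*hI - qd1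
      - ((s:ℂ)+(c:ℂ))*qd3 + (r:ℂ)*qd4 - (r:ℂ)*qd2 + (qd24 + (r:ℂ)*qd2 - (r:ℂ)*qd4) - qr
      + 2*((s:ℂ)+(c:ℂ))*(1-(c2:ℂ)^2)*q1 + 2*((s:ℂ)+(c:ℂ))*(s1:ℂ)^2*q2 + qp
      + 2*((s:ℂ)+(c:ℂ))*(s1:ℂ)^2*(s2:ℂ)^2*(Complex.I^2-1)*hI
  · refine mul_right_cancel₀ h2u ?_
    linear_combination (2*((s:ℂ)+(c:ℂ)))*(-(Complex.sin (t:ℂ) + 2*(c1:ℂ)*(c2:ℂ)*(s1:ℂ)*(s2:ℂ)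
        - (c1:ℂ)^2*(s2:ℂ)^2 + (c2:ℂ)^2*(s1:ℂ)^2))*hI
      + (2*((s:ℂ)+(c:ℂ)))*hss - qd1 + ((s:ℂ)+(c:ℂ))*qd3 + 2*((s:ℂ)+(c:ℂ))*(c2:ℂ)^2*q1 - 2*((s:ℂ)+(c:ℂ))*(c1:ℂ)^2*q2
      - qr + (r:ℂ)*qd4 - (r:ℂ)*qd2 + (qd24 + (r:ℂ)*qd2 - (r:ℂ)*qd4) + qp
  · refine mul_right_cancel₀ h2u ?_
    linear_combination -Complex.I*qd2 + Complex.I*(r:ℂ)*qd1 - Complex.I*qd4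
      - Complex.I*(qd41 - qd4 + (r:ℂ)*qd1) - 2*((s:ℂ)+(c:ℂ))*Complex.I*(c1:ℂ)*(s1:ℂ)*q2
      + 2*((s:ℂ)+(c:ℂ))*Complex.I*(c2:ℂ)*(s2:ℂ)*q1
      - 2*((s:ℂ)+(c:ℂ))*Complex.I*((s1:ℂ)^2*(c2:ℂ)*(s2:ℂ) - (s1:ℂ)*(s2:ℂ)^2*(c1:ℂ))*hI
  · refine mul_right_cancel₀ h2u ?_
    linear_combination -Complex.I*qd2 + Complex.I*(r:ℂ)*qd1 - Complex.I*qd4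
      - Complex.I*(qd41 - qd4 + (r:ℂ)*qd1) - 2*((s:ℂ)+(c:ℂ))*Complex.I*(c1:ℂ)*(s1:ℂ)*q2
      + 2*((s:ℂ)+(c:ℂ))*Complex.I*(c2:ℂ)*(s2:ℂ)*q1
      + 2*((s:ℂ)+(c:ℂ))*Complex.I*((c1:ℂ)*(s2:ℂ)^2*(s1:ℂ) - (s1:ℂ)^2*(s2:ℂ)*(c2:ℂ))*hI
end

section
/- With the setup of the depth-3 decomposition: for 0 ≤ t ≤ π/2 and 0 < θ < π/2, the pulse times t₁ = (1/2)·arctan( cos(θ)sin(t)/cos(t) ) (principal branch, with the positive-cosine solution) and t₂ = arcsin( sin(θ)sin(t) ) satisfy |t₁| ≤ t/2 and |t₂| ≤ t·θ. -/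
/-- Pulse-time bounds for the depth-3 decomposition: for `0 ≤ t ≤ π/2` and
`0 < θ < π/2`, the pulse times `t₁ = (1/2)·arctan(cos θ sin t / cos t)` and
`t₂ = arcsin(sin θ sin t)` satisfy `|t₁| ≤ t/2` and `|t₂| ≤ t·θ`. -/
theorem depth3_pulse_time_bounds
    (t θ : ℝ) (ht0 : 0 ≤ t) (ht1 : t ≤ Real.pi / 2)
    (hθ0 : 0 < θ) (hθ1 : θ < Real.pi / 2) :
    |(1 / 2) * Real.arctan (Real.cos θ * Real.sin t / Real.cos t)| ≤ t / 2 ∧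
    |Real.arcsin (Real.sin θ * Real.sin t)| ≤ t * θ := by
  have hpi := Real.pi_pos
  have hs : 0 ≤ Real.sin t :=
    Real.sin_nonneg_of_nonneg_of_le_pi ht0 (by linarith)
  have hs1 : Real.sin t ≤ 1 := Real.sin_le_one t
  have hsθ : 0 ≤ Real.sin θ :=
    Real.sin_nonneg_of_nonneg_of_le_pi (le_of_lt hθ0) (by linarith)
  have hsθ1 : Real.sin θ ≤ 1 := Real.sin_le_one θ
  have hcθ : 0 ≤ Real.cos θ :=
    Real.cos_nonneg_of_mem_Icc ⟨by linarith, le_of_lt hθ1⟩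
  constructor
  · rcases eq_or_lt_of_le (Real.cos_nonneg_of_mem_Icc ⟨by linarith, ht1⟩) with h0 | hc
    · rw [← h0, div_zero, Real.arctan_zero, mul_zero, abs_zero]; linarith
    · have htlt : t < Real.pi / 2 := by
        rcases lt_or_eq_of_le ht1 with h | h
        · exact h
        · exfalso; rw [h, Real.cos_pi_div_two] at hc; exact lt_irrefl 0 hc
      have harg : 0 ≤ Real.cos θ * Real.sin t / Real.cos t :=
        div_nonneg (mul_nonneg hcθ hs) (le_of_lt hc)
      have hA : 0 ≤ Real.arctan (Real.cos θ * Real.sin t / Real.cos t) := by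
        rw [← Real.arctan_zero]
        exact Real.arctan_strictMono.monotone harg
      rw [abs_of_nonneg (by linarith)]
      have hle : Real.cos θ * Real.sin t / Real.cos t ≤ Real.sin t / Real.cos t := by
        gcongr
        exact mul_le_of_le_one_left hs (Real.cos_le_one θ)
      have h2 : Real.arctan (Real.cos θ * Real.sin t / Real.cos t) ≤ t := by
        calc Real.arctan (Real.cos θ * Real.sin t / Real.cos t)
            ≤ Real.arctan (Real.sin t / Real.cos t) := Real.arctan_strictMono.monotone hle
          _ = Real.arctan (Real.tan t) := by rw [Real.tan_eq_sin_div_cos]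
          _ = t := Real.arctan_tan (by linarith) htlt
      linarith
  · have hu0 : 0 ≤ Real.sin θ * Real.sin t := mul_nonneg hsθ hs
    have hu1 : Real.sin θ * Real.sin t ≤ 1 := by nlinarith
    have hA0 : 0 ≤ Real.arcsin (Real.sin θ * Real.sin t) := Real.arcsin_nonneg.mpr hu0
    rw [abs_of_nonneg hA0]
    rcases le_or_gt (Real.pi / 2) (t * θ) with hbig | hsmall
    · exact le_trans (Real.arcsin_le_pi_div_two _) hbig
    · have hkey : Real.sin θ * Real.sin t ≤ Real.sin (t * θ) := by
        rcases le_or_gt t 1 with ht' | ht'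
        · -- concavity: sin(t*θ) ≥ t * sin θ ≥ sin t * sin θ
          have hconc := strictConcaveOn_sin_Icc.concaveOn.2
            (show θ ∈ Set.Icc 0 Real.pi from ⟨le_of_lt hθ0, by linarith⟩)
            (show (0:ℝ) ∈ Set.Icc 0 Real.pi from ⟨le_rfl, by linarith⟩)
            ht0 (show (0:ℝ) ≤ 1 - t by linarith) (by ring)
          simp only [smul_eq_mul, Real.sin_zero, mul_zero, add_zero] at hconc
          have : Real.sin t * Real.sin θ ≤ t * Real.sin θ :=
            mul_le_mul_of_nonneg_right (Real.sin_le ht0) hsθ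
          nlinarith
        · -- t ≥ 1: sin(t*θ) ≥ sin θ ≥ sin θ * sin t
          have h1 : θ ≤ t * θ := by nlinarith
          have h2 : Real.sin θ ≤ Real.sin (t * θ) := by
            apply Real.sin_le_sin_of_le_of_le_pi_div_two ?_ (le_of_lt hsmall) h1
            linarith
          nlinarith
      calc Real.arcsin (Real.sin θ * Real.sin t)
          ≤ Real.arcsin (Real.sin (t * θ)) := Real.monotone_arcsin hkey
        _ = t * θ := Real.arcsin_sin (by nlinarith) (le_of_lt hsmall)
end

section
/- For 0 ≤ t ≤ π/2, the function t₁(t) = (1/2)·atan2( -√(sin 2t)/(sin t + cos t), 1/(sin t + cos t) ) satisfies |t₁(t)| ≤ √(t/2), and together with t₂(t) = (1/2)·atan2( √(sin 2t), cos t - sin t ) one has |t₁(t)| + |t₂(t)| ≤ √(2t). -/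
open Real

private lemma taylor_step {f g f' g' : ℝ → ℝ}
    (hf : ∀ x, HasDerivAt f (f' x) x) (hg : ∀ x, HasDerivAt g (g' x) x)
    (h0 : f 0 ≤ g 0) (hd : ∀ x, 0 ≤ x → f' x ≤ g' x) :
    ∀ x, 0 ≤ x → f x ≤ g x := by
  intro x hx
  have hgd : Differentiable ℝ g := fun y => (hg y).differentiableAt
  have hfd : Differentiable ℝ f := fun y => (hf y).differentiableAt
  have hmono : MonotoneOn (fun y => g y - f y) (Set.Ici 0) := by
    apply monotoneOn_of_deriv_nonneg (convex_Ici 0)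
    · exact (hgd.sub hfd).continuous.continuousOn
    · exact (hgd.sub hfd).differentiableOn
    · intro y hy
      rw [interior_Ici] at hy
      have hder : deriv (fun y => g y - f y) y = g' y - f' y := ((hg y).sub (hf y)).deriv
      rw [hder]
      linarith [hd y (le_of_lt hy)]
  have h2 := hmono Set.self_mem_Ici (Set.mem_Ici.2 hx) hx
  simp only [] at h2
  linarith [h2]

private lemma sin_ge_cubic : ∀ x : ℝ, 0 ≤ x → x - x ^ 3 / 6 ≤ Real.sin x := by
  apply taylor_step (f' := fun x => 1 - x ^ 2 / 2) (g' := fun x => Real.cos x)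
  · intro x
    have h : HasDerivAt (fun x : ℝ => x - x ^ 3 / 6) (1 - (3 : ℕ) * x ^ 2 / 6) x :=
      (hasDerivAt_id x).sub ((hasDerivAt_pow 3 x).div_const 6)
    convert h using 1
    push_cast; ring
  · exact Real.hasDerivAt_sin
  · norm_num
  · intro x _; exact Real.one_sub_sq_div_two_le_cos

private lemma cos_le_quartic : ∀ x : ℝ, 0 ≤ x →
    Real.cos x ≤ 1 - x ^ 2 / 2 + x ^ 4 / 24 := by
  apply taylor_step (f' := fun x => -Real.sin x) (g' := fun x => -(x - x ^ 3 / 6))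
  · exact Real.hasDerivAt_cos
  · intro x
    have h : HasDerivAt (fun x : ℝ => 1 - x ^ 2 / 2 + x ^ 4 / 24)
        (0 - (2 : ℕ) * x ^ 1 / 2 + (4 : ℕ) * x ^ 3 / 24) x :=
      (((hasDerivAt_const x (1 : ℝ)).sub ((hasDerivAt_pow 2 x).div_const 2)).add
        ((hasDerivAt_pow 4 x).div_const 24))
    convert h using 1
    push_cast; ring
  · norm_num
  · intro x hx
    have := sin_ge_cubic x hx
    linarith

private lemma sin_le_quintic : ∀ x : ℝ, 0 ≤ x →
    Real.sin x ≤ x - x ^ 3 / 6 + x ^ 5 / 120 := by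
  apply taylor_step (f' := fun x => Real.cos x)
      (g' := fun x => 1 - x ^ 2 / 2 + x ^ 4 / 24)
  · exact Real.hasDerivAt_sin
  · intro x
    have h : HasDerivAt (fun x : ℝ => x - x ^ 3 / 6 + x ^ 5 / 120)
        (1 - (3 : ℕ) * x ^ 2 / 6 + (5 : ℕ) * x ^ 4 / 120) x :=
      ((hasDerivAt_id x).sub ((hasDerivAt_pow 3 x).div_const 6)).add
        ((hasDerivAt_pow 5 x).div_const 120)
    convert h using 1
    push_cast; ring
  · norm_num
  · intro x hx; exact cos_le_quartic x hx

private lemma cos_ge_sextic : ∀ x : ℝ, 0 ≤ x →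
    1 - x ^ 2 / 2 + x ^ 4 / 24 - x ^ 6 / 720 ≤ Real.cos x := by
  apply taylor_step (g' := fun x => -Real.sin x)
      (f' := fun x => -(x - x ^ 3 / 6 + x ^ 5 / 120))
  · intro x
    have h : HasDerivAt (fun x : ℝ => 1 - x ^ 2 / 2 + x ^ 4 / 24 - x ^ 6 / 720)
        (0 - (2 : ℕ) * x ^ 1 / 2 + (4 : ℕ) * x ^ 3 / 24 - (6 : ℕ) * x ^ 5 / 720) x :=
      ((((hasDerivAt_const x (1 : ℝ)).sub ((hasDerivAt_pow 2 x).div_const 2)).add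
        ((hasDerivAt_pow 4 x).div_const 24)).sub ((hasDerivAt_pow 6 x).div_const 720))
    convert h using 1
    push_cast; ring
  · exact Real.hasDerivAt_cos
  · norm_num
  · intro x hx
    have := sin_le_quintic x hx
    linarith

private lemma sin_ge_septic : ∀ x : ℝ, 0 ≤ x →
    x - x ^ 3 / 6 + x ^ 5 / 120 - x ^ 7 / 5040 ≤ Real.sin x := by
  apply taylor_step (g' := fun x => Real.cos x)
      (f' := fun x => 1 - x ^ 2 / 2 + x ^ 4 / 24 - x ^ 6 / 720)
  · intro x
    have h : HasDerivAt (fun x : ℝ => x - x ^ 3 / 6 + x ^ 5 / 120 - x ^ 7 / 5040)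
        (1 - (3 : ℕ) * x ^ 2 / 6 + (5 : ℕ) * x ^ 4 / 120 - (7 : ℕ) * x ^ 6 / 5040) x :=
      (((hasDerivAt_id x).sub ((hasDerivAt_pow 3 x).div_const 6)).add
        ((hasDerivAt_pow 5 x).div_const 120)).sub ((hasDerivAt_pow 7 x).div_const 5040)
    convert h using 1
    push_cast; ring
  · exact Real.hasDerivAt_sin
  · norm_num
  · intro x hx; exact cos_ge_sextic x hx

private lemma cos_le_octic : ∀ x : ℝ, 0 ≤ x →
    Real.cos x ≤ 1 - x ^ 2 / 2 + x ^ 4 / 24 - x ^ 6 / 720 + x ^ 8 / 40320 := by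
  apply taylor_step (f' := fun x => -Real.sin x)
      (g' := fun x => -(x - x ^ 3 / 6 + x ^ 5 / 120 - x ^ 7 / 5040))
  · exact Real.hasDerivAt_cos
  · intro x
    have h : HasDerivAt
        (fun x : ℝ => 1 - x ^ 2 / 2 + x ^ 4 / 24 - x ^ 6 / 720 + x ^ 8 / 40320)
        (0 - (2 : ℕ) * x ^ 1 / 2 + (4 : ℕ) * x ^ 3 / 24 - (6 : ℕ) * x ^ 5 / 720
          + (8 : ℕ) * x ^ 7 / 40320) x :=
      (((((hasDerivAt_const x (1 : ℝ)).sub ((hasDerivAt_pow 2 x).div_const 2)).add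
        ((hasDerivAt_pow 4 x).div_const 24)).sub ((hasDerivAt_pow 6 x).div_const 720)).add
        ((hasDerivAt_pow 8 x).div_const 40320))
    convert h using 1
    push_cast; ring
  · norm_num
  · intro x hx
    have := sin_ge_septic x hx
    linarith

/- The quotient `E(t)/t²` of the corner polynomial: positive on `[0, 1.234]`. -/
private lemma polyQ (t : ℝ) (h0 : 0 ≤ t) (h1 : t ≤ 1.234) :
    0 ≤ 4/3 - 103/45*t + 134/105*t^2 - 163/1260*t^3 - 55/378*t^4 + 331/7560*t^5
      + 17/3150*t^6 - 1357/453600*t^7 + 2/14175*t^8 + 1/43200*t^9 := by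
  nlinarith [mul_nonneg (pow_nonneg (by linarith : (0:ℝ) ≤ 1.234 - t) 4) h0,
    mul_nonneg (mul_nonneg (pow_nonneg (by linarith : (0:ℝ) ≤ 1.234 - t) 4) h0) h0,
    mul_nonneg (mul_nonneg (mul_nonneg (pow_nonneg (by linarith : (0:ℝ) ≤ 1.234 - t) 4) h0) h0) h0,
    pow_nonneg (by linarith : (0:ℝ) ≤ 1.234 - t) 4,
    mul_nonneg (mul_nonneg (mul_nonneg (mul_nonneg (pow_nonneg
      (by linarith : (0:ℝ) ≤ 1.234 - t) 4) h0) h0) h0) h0,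
    mul_nonneg (mul_nonneg (mul_nonneg (mul_nonneg (mul_nonneg (pow_nonneg
      (by linarith : (0:ℝ) ≤ 1.234 - t) 4) h0) h0) h0) h0) h0]

private lemma polyA (t : ℝ) (h0 : 0 ≤ t) (h1 : t ≤ 1.234) :
    0 ≤ 1 - 2*(t - t^3/6 + t^5/120)
        - (1 - 4*t + 8/3*t^2 - 32/45*t^3 + 32/315*t^4) := by
  nlinarith [mul_nonneg (mul_nonneg (mul_nonneg (mul_nonneg h0 h0) h0) h0)
      (by linarith : (0:ℝ) ≤ 1.234 - t),
    mul_nonneg (mul_nonneg (mul_nonneg h0 h0) h0) (by linarith : (0:ℝ) ≤ 1.234 - t),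
    mul_nonneg (mul_nonneg h0 h0) h0, mul_nonneg h0 h0]

private lemma polyB (t : ℝ) (h0 : 0 ≤ t) (h1 : t ≤ 1.234) :
    0 ≤ 1 + 2*(1 - t^2/2 + t^4/24 - t^6/720)
        + (1 - 4*t + 8/3*t^2 - 32/45*t^3 + 32/315*t^4) := by
  nlinarith [mul_nonneg (mul_nonneg (mul_nonneg (mul_nonneg h0 h0) h0) h0)
      (by linarith : (0:ℝ) ≤ 1.234 - t),
    mul_nonneg (mul_nonneg (mul_nonneg (mul_nonneg (mul_nonneg h0 h0) h0) h0) h0)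
      (by linarith : (0:ℝ) ≤ 1.234 - t),
    mul_nonneg (mul_nonneg h0 h0) (by linarith : (0:ℝ) ≤ 1.234 - t),
    mul_nonneg h0 (by linarith : (0:ℝ) ≤ 1.234 - t), mul_nonneg h0 h0]

-- Core analytic inequality.
set_option maxHeartbeats 1000000 in
private lemma key (t : ℝ) (h0 : 0 ≤ t) (h1 : t ≤ 1.234) :
    Real.cos (Real.sqrt (8*t)) * (Real.sin t + Real.cos t)
      ≤ Real.cos t - Real.sin t - Real.sin (2*t) := by
  have hπ : t ≤ π := le_trans h1 (by linarith [Real.pi_gt_three])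
  have hS0 : 0 ≤ Real.sin t := Real.sin_nonneg_of_nonneg_of_le_pi h0 hπ
  have hC0 : 0 ≤ Real.cos t := by
    apply Real.cos_nonneg_of_mem_Icc
    constructor <;> [linarith; linarith [Real.pi_gt_three]]
  have hS1 : Real.sin t ≤ t - t^3/6 + t^5/120 := sin_le_quintic t h0
  have hC1 : 1 - t^2/2 + t^4/24 - t^6/720 ≤ Real.cos t := cos_ge_sextic t h0
  have hsum : 0 ≤ Real.sin t + Real.cos t := by linarith
  -- bound cos √(8t)
  have hx0 : 0 ≤ Real.sqrt (8*t) := Real.sqrt_nonneg _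
  have hx2 : Real.sqrt (8*t) ^ 2 = 8*t := Real.sq_sqrt (by linarith)
  have hP : Real.cos (Real.sqrt (8*t))
      ≤ 1 - 4*t + 8/3*t^2 - 32/45*t^3 + 32/315*t^4 := by
    have h := cos_le_octic (Real.sqrt (8*t)) hx0
    have e4 : Real.sqrt (8*t) ^ 4 = (8*t)^2 := by
      have h' : Real.sqrt (8*t) ^ 4 = (Real.sqrt (8*t) ^ 2) ^ 2 := by ring
      rw [h', hx2]
    have e6 : Real.sqrt (8*t) ^ 6 = (8*t)^3 := by
      have h' : Real.sqrt (8*t) ^ 6 = (Real.sqrt (8*t) ^ 2) ^ 3 := by ring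
      rw [h', hx2]
    have e8 : Real.sqrt (8*t) ^ 8 = (8*t)^4 := by
      have h' : Real.sqrt (8*t) ^ 8 = (Real.sqrt (8*t) ^ 2) ^ 4 := by ring
      rw [h', hx2]
    linarith [h, hx2, e4, e6, e8]
  have hA := polyA t h0 h1
  have hB := polyB t h0 h1
  have hQ := polyQ t h0 h1
  have hE : 0 ≤ t^2 * (4/3 - 103/45*t + 134/105*t^2 - 163/1260*t^3 - 55/378*t^4
      + 331/7560*t^5 + 17/3150*t^6 - 1357/453600*t^7 + 2/14175*t^8 + 1/43200*t^9) :=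
    mul_nonneg (sq_nonneg t) hQ
  have hmul : Real.cos (Real.sqrt (8*t)) * (Real.sin t + Real.cos t)
      ≤ (1 - 4*t + 8/3*t^2 - 32/45*t^3 + 32/315*t^4) * (Real.sin t + Real.cos t) :=
    mul_le_mul_of_nonneg_right hP hsum
  have hterm1 : 0 ≤ (Real.cos t - (1 - t^2/2 + t^4/24 - t^6/720))
      * (1 - 2*Real.sin t - (1 - 4*t + 8/3*t^2 - 32/45*t^3 + 32/315*t^4)) := by
    apply mul_nonneg (by linarith)
    linarith
  have hterm2 : 0 ≤ ((t - t^3/6 + t^5/120) - Real.sin t)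
      * (1 + 2*(1 - t^2/2 + t^4/24 - t^6/720)
          + (1 - 4*t + 8/3*t^2 - 32/45*t^3 + 32/315*t^4)) := by
    apply mul_nonneg (by linarith)
    linarith
  rw [Real.sin_two_mul]
  linarith [hmul, hterm1, hterm2, hE]

set_option maxHeartbeats 1000000 in
/-- Pulse-time bounds for the depth-4 decomposition: for `0 ≤ t ≤ π/2`,
`|t₁(t)| ≤ √(t/2)` and `|t₁(t)| + |t₂(t)| ≤ √(2t)`. -/
theorem depth4_pulse_time_bounds
    (t : ℝ) (ht0 : 0 ≤ t) (ht1 : t ≤ Real.pi / 2) :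
    |(1 / 2) * atan2 (-Real.sqrt (Real.sin (2 * t)) / (Real.sin t + Real.cos t))
        (1 / (Real.sin t + Real.cos t))| ≤ Real.sqrt (t / 2) ∧
    |(1 / 2) * atan2 (-Real.sqrt (Real.sin (2 * t)) / (Real.sin t + Real.cos t))
        (1 / (Real.sin t + Real.cos t))| +
      |(1 / 2) * atan2 (Real.sqrt (Real.sin (2 * t))) (Real.cos t - Real.sin t)|
      ≤ Real.sqrt (2 * t) := by
  have hπ := Real.pi_gt_three
  have hS0 : 0 ≤ Real.sin t := Real.sin_nonneg_of_nonneg_of_le_pi ht0 (by linarith)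
  have hC0 : 0 ≤ Real.cos t := Real.cos_nonneg_of_mem_Icc ⟨by linarith, ht1⟩
  have hS1 : Real.sin t ≤ 1 := Real.sin_le_one t
  have hC1 : Real.cos t ≤ 1 := Real.cos_le_one t
  have hSC : Real.sin t ^ 2 + Real.cos t ^ 2 = 1 := Real.sin_sq_add_cos_sq t
  have hsum1 : 1 ≤ Real.sin t + Real.cos t := by nlinarith
  have hsum0 : 0 < Real.sin t + Real.cos t := by linarith
  set S := Real.sin t
  set C := Real.cos t
  have hsin2 : Real.sin (2 * t) = 2 * S * C := Real.sin_two_mul t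
  have hsin2nn : 0 ≤ Real.sin (2 * t) := by rw [hsin2]; positivity
  set s := Real.sqrt (Real.sin (2 * t)) with hs_def
  have hs0 : 0 ≤ s := Real.sqrt_nonneg _
  have hs2 : s ^ 2 = 2 * S * C := by rw [hs_def, Real.sq_sqrt hsin2nn, hsin2]
  have hs1 : s ≤ 1 := Real.sqrt_le_one.2 (by rw [hsin2]; nlinarith [sq_nonneg (S - C), hSC])
  have hsumsq : (S + C) ^ 2 = 1 + s ^ 2 := by rw [hs2]; nlinarith
  have hsqrt1s : Real.sqrt (1 + s ^ 2) = S + C := by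
    rw [← hsumsq, Real.sqrt_sq hsum0.le]
  set c := C - S with hc_def
  have hcs : c ^ 2 + s ^ 2 = 1 := by rw [hs2, hc_def]; nlinarith
  have hc1 : -1 ≤ c := by nlinarith
  have hc1' : c ≤ 1 := by nlinarith
  -- value of the first atan2
  have harg1 : atan2 (-s / (S + C)) (1 / (S + C)) = -(Real.arctan s) := by
    have hθ : -(Real.arctan s) ∈ Set.Ioc (-π) π := by
      constructor
      · have := Real.arctan_lt_pi_div_two s
        have := Real.pi_pos
        simp only [neg_lt_neg_iff]
        linarith
      · have : 0 ≤ Real.arctan s := by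
          rw [← Real.arctan_zero]
          exact Real.arctan_strictMono.monotone hs0
        linarith [Real.pi_pos]
    have hcosθ : Real.cos (-(Real.arctan s)) = 1 / (S + C) := by
      rw [Real.cos_neg, Real.cos_arctan, hsqrt1s]
    have hsinθ : Real.sin (-(Real.arctan s)) = -s / (S + C) := by
      rw [Real.sin_neg, Real.sin_arctan, hsqrt1s, neg_div]
    unfold atan2
    have hz : ((1 / (S + C) : ℝ) : ℂ) + ((-s / (S + C) : ℝ) : ℂ) * Complex.I
        = Complex.cos (-(Real.arctan s) : ℝ) + Complex.sin (-(Real.arctan s) : ℝ) * Complex.I := by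
      rw [← Complex.ofReal_cos, ← Complex.ofReal_sin, hcosθ, hsinθ]
    rw [hz]
    exact Complex.arg_cos_add_sin_mul_I hθ
  -- value of the second atan2
  have harg2 : atan2 s c = Real.arccos c := by
    have hθ : Real.arccos c ∈ Set.Ioc (-π) π := by
      constructor
      · linarith [Real.arccos_nonneg c, Real.pi_pos]
      · exact Real.arccos_le_pi c
    have hcosθ : Real.cos (Real.arccos c) = c := Real.cos_arccos hc1 hc1'
    have hsinθ : Real.sin (Real.arccos c) = s := by
      rw [Real.sin_arccos, show 1 - c ^ 2 = s ^ 2 by linarith, Real.sqrt_sq hs0]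
    unfold atan2
    have hz : ((c : ℝ) : ℂ) + ((s : ℝ) : ℂ) * Complex.I
        = Complex.cos (Real.arccos c : ℝ) + Complex.sin (Real.arccos c : ℝ) * Complex.I := by
      rw [← Complex.ofReal_cos, ← Complex.ofReal_sin, hcosθ, hsinθ]
    rw [hz]
    exact Complex.arg_cos_add_sin_mul_I hθ
  have harctan_nn : 0 ≤ Real.arctan s := by
    rw [← Real.arctan_zero]
    exact Real.arctan_strictMono.monotone hs0
  have habs1 : |(1 / 2) * atan2 (-s / (S + C)) (1 / (S + C))|
      = Real.arctan s / 2 := by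
    rw [harg1, abs_mul, abs_neg, abs_of_nonneg harctan_nn,
      abs_of_nonneg (by norm_num : (0:ℝ) ≤ 1/2)]
    ring
  have habs2 : |(1 / 2) * atan2 s c| = Real.arccos c / 2 := by
    rw [harg2, abs_mul, abs_of_nonneg (Real.arccos_nonneg c),
      abs_of_nonneg (by norm_num : (0:ℝ) ≤ 1/2)]
    ring
  -- arctan s ≤ s
  have harctan_le : Real.arctan s ≤ s := by
    have h := Real.le_tan harctan_nn (Real.arctan_lt_pi_div_two s)
    rwa [Real.tan_arctan] at h
  -- s ≤ √(2t)
  have hs_le : s ≤ Real.sqrt (2 * t) := by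
    rw [hs_def]
    exact Real.sqrt_le_sqrt (Real.sin_le (by linarith))
  -- √(2t) = 2√(t/2)
  have hsqrt_half : Real.sqrt (2 * t) = 2 * Real.sqrt (t / 2) := by
    rw [show 2 * t = 4 * (t / 2) by ring, show (4:ℝ) = 2 ^ 2 by norm_num,
      Real.sqrt_mul (by positivity), Real.sqrt_sq (by norm_num)]
  have goal1 : |(1 / 2) * atan2 (-s / (S + C)) (1 / (S + C))| ≤ Real.sqrt (t / 2) := by
    rw [habs1]
    have : Real.arctan s ≤ Real.sqrt (2 * t) := le_trans harctan_le hs_le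
    rw [hsqrt_half] at this
    linarith
  refine ⟨goal1, ?_⟩
  rw [habs1, habs2]
  -- θ := arctan s + arccos c
  set θ := Real.arctan s + Real.arccos c with hθ_def
  have hθ0 : 0 ≤ θ := by
    have := Real.arccos_nonneg c
    linarith
  have hθπ : θ ≤ π := by
    rcases le_or_gt 0 c with hc | hc
    · have h1 : Real.arccos c ≤ π / 2 := Real.arccos_le_pi_div_two.2 hc
      have h2 : Real.arctan s < π / 2 := Real.arctan_lt_pi_div_two s
      linarith
    · -- c < 0 : arccos c = π - arccos (-c), arccos (-c) = arcsin s, arctan s ≤ arcsin s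
      have hslt1 : s < 1 := by nlinarith [hcs, mul_pos (neg_pos.2 hc) (neg_pos.2 hc), hs0, hs1]
      have hrw : Real.arccos c = π - Real.arccos (-c) := by
        have h' := Real.arccos_neg (-c)
        rw [neg_neg] at h'
        exact h'
      have hacs : Real.arccos (-c) = Real.arcsin s := by
        rw [Real.arccos_eq_arcsin (by linarith)]
        congr 1
        rw [show 1 - (-c) ^ 2 = s ^ 2 by nlinarith, Real.sqrt_sq hs0]
      have harcsin : Real.arcsin s = Real.arctan (s / Real.sqrt (1 - s ^ 2)) :=
        Real.arcsin_eq_arctan ⟨by linarith, hslt1⟩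
      have hd0 : 0 < Real.sqrt (1 - s ^ 2) := Real.sqrt_pos.2 (by nlinarith)
      have hd1 : Real.sqrt (1 - s ^ 2) ≤ 1 :=
        Real.sqrt_le_one.2 (by nlinarith)
      have hle : s ≤ s / Real.sqrt (1 - s ^ 2) := by
        rw [le_div_iff₀ hd0]
        nlinarith [mul_le_mul_of_nonneg_left hd1 hs0]
      have : Real.arctan s ≤ Real.arcsin s := by
        rw [harcsin]
        exact Real.arctan_strictMono.monotone hle
      rw [hθ_def, hrw, hacs]
      linarith
  have hcosθ : Real.cos θ = (c - s ^ 2) / (S + C) := by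
    rw [hθ_def, Real.cos_add, Real.cos_arctan, Real.sin_arctan,
      Real.cos_arccos hc1 hc1',
      Real.sin_arccos, show 1 - c ^ 2 = s ^ 2 by linarith, Real.sqrt_sq hs0, hsqrt1s]
    field_simp
  -- final: θ ≤ √(8t) = 2√(2t)
  have hsqrt8 : Real.sqrt (8 * t) = 2 * Real.sqrt (2 * t) := by
    rw [show 8 * t = 2 ^ 2 * (2 * t) by ring,
      Real.sqrt_mul (by positivity), Real.sqrt_sq (by norm_num)]
  have hθle : θ ≤ Real.sqrt (8 * t) := by
    rcases le_or_gt π (Real.sqrt (8 * t)) with hcase | hcase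
    · linarith
    · -- then t ≤ 1.234
      have ht_small : t ≤ 1.234 := by
        by_contra hcon
        push_neg at hcon
        have h8 : π ^ 2 < 8 * t := by nlinarith [Real.pi_lt_d6, Real.pi_pos]
        have : π ≤ Real.sqrt (8 * t) := by
          rw [show π = Real.sqrt (π ^ 2) by rw [Real.sqrt_sq Real.pi_pos.le]]
          exact Real.sqrt_le_sqrt h8.le
        linarith
      have hkey := key t ht0 ht_small
      have hw : Real.cos (Real.sqrt (8 * t)) ≤ (c - s ^ 2) / (S + C) := by
        rw [le_div_iff₀ hsum0]
        calc Real.cos (Real.sqrt (8 * t)) * (S + C)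
            ≤ C - S - Real.sin (2 * t) := hkey
          _ = c - s ^ 2 := by rw [hsin2, hs2, hc_def]
      by_contra hcon
      push_neg at hcon
      have hlt : Real.cos θ < Real.cos (Real.sqrt (8 * t)) :=
        Real.strictAntiOn_cos ⟨Real.sqrt_nonneg _, hcase.le⟩ ⟨hθ0, hθπ⟩ hcon
      rw [hcosθ] at hlt
      linarith
  rw [hsqrt8] at hθle
  linarith
end

section
/- Define B_p for p = 2k by B_2 = 1/2 and B_{2k} = (1/2)·∏_{i=2}^{k} |1 - 4a_i| for k ≥ 2, where a_i = 1/(4 - 4^{1/(2i-1)}). Then B_{2k} ≤ (1/2)·(2/3)^{k-1} for all k ≥ 1. -/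
lemma suzuki_rpow_bound {i : ℕ} (hi : 2 ≤ i) :
    (4 : ℝ) ^ ((1 : ℝ) / (2 * (i : ℝ) - 1)) ≤ 8 / 5 := by
  have hden : (3 : ℝ) ≤ 2 * (i : ℝ) - 1 := by
    have : (2 : ℝ) ≤ (i : ℝ) := by exact_mod_cast hi
    linarith
  have h1 : (4 : ℝ) ^ ((1 : ℝ) / (2 * (i : ℝ) - 1)) ≤ (4 : ℝ) ^ ((1 : ℝ) / 3) := by
    apply Real.rpow_le_rpow_of_exponent_le (by norm_num)
    apply one_div_le_one_div_of_le <;> linarith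
  have h2 : (4 : ℝ) ^ ((1 : ℝ) / 3) ≤ 8 / 5 := by
    have : (4 : ℝ) ≤ (8 / 5 : ℝ) ^ (3 : ℕ) := by norm_num
    calc (4 : ℝ) ^ ((1 : ℝ) / 3) ≤ ((8 / 5 : ℝ) ^ (3 : ℕ)) ^ ((1 : ℝ) / 3) :=
          Real.rpow_le_rpow (by norm_num) this (by norm_num)
      _ = (8 / 5 : ℝ) ^ ((3 : ℝ) * ((1 : ℝ) / 3)) := by
          rw [← Real.rpow_natCast (8 / 5 : ℝ) 3, ← Real.rpow_mul (by norm_num)]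
          norm_num
      _ = 8 / 5 := by norm_num
  linarith

/-- Bound on the products of Suzuki coefficients:
`B_{2k} = (1/2)·∏_{i=2}^{k} |1 - 4a_i| ≤ (1/2)·(2/3)^{k-1}` for all `k ≥ 1`. -/
theorem suzuki_product_bound
    (a : ℕ → ℝ)
    (ha : ∀ i : ℕ, a i = 1 / (4 - (4 : ℝ) ^ ((1 : ℝ) / (2 * (i : ℝ) - 1)))) :
    ∀ k : ℕ, 1 ≤ k →
      (1 / 2) * ∏ i ∈ Finset.Icc 2 k, |1 - 4 * a i| ≤ (1 / 2) * (2 / 3) ^ (k - 1) := by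
  intro k hk
  have hfac : ∀ i ∈ Finset.Icc 2 k, |1 - 4 * a i| ≤ 2 / 3 := by
    intro i hi
    have hi2 : 2 ≤ i := (Finset.mem_Icc.mp hi).1
    rw [ha i]
    set t := (4 : ℝ) ^ ((1 : ℝ) / (2 * (i : ℝ) - 1)) with ht
    have ht1 : t ≤ 8 / 5 := suzuki_rpow_bound hi2
    have ht0 : 0 < t := Real.rpow_pos_of_pos (by norm_num) _
    have hpos : (0 : ℝ) < 4 - t := by linarith
    rw [abs_le]
    constructor
    · have : 1 / (4 - t) ≤ 5 / 12 := by
        rw [div_le_div_iff₀ hpos (by norm_num)]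
        linarith
      linarith
    · have : (1 : ℝ) / 12 ≤ 1 / (4 - t) := by
        rw [div_le_div_iff₀ (by norm_num) hpos]
        linarith
      nlinarith
  have hprod : ∏ i ∈ Finset.Icc 2 k, |1 - 4 * a i| ≤ (2 / 3) ^ (k - 1) := by
    calc ∏ i ∈ Finset.Icc 2 k, |1 - 4 * a i| ≤ ∏ _i ∈ Finset.Icc 2 k, (2 / 3 : ℝ) :=
          Finset.prod_le_prod (fun i _ => abs_nonneg _) hfac
      _ = (2 / 3 : ℝ) ^ (k - 1) := by
          rw [Finset.prod_const, Nat.card_Icc, show k + 1 - 2 = k - 1 by omega]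
  linarith
end
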